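/- The quadratic polynomial a^2 + b^2 + c^2 + ab + bc + ca + a + b + c represents every nonnegative integer as a, b, c range over the integers. -/

import Mathlib

namespace UQP

/-! ### Binary forms: Q = a x² + b y² + 2 d x y -/

structure F2 where
  a : ℤ
  b : ℤ
  d : ℤ

def Q2 (H : F2) (x y : ℤ) : ℤ := H.a*x^2 + H.b*y^2 + 2*H.d*x*y

def det2 (H : F2) : ℤ := H.a*H.b - H.d^2

structure M2 where
  p : ℤ
  q : ℤ
  r : ℤ
  s : ℤ

def detM2 (R : M2) : ℤ := R.p*R.s - R.q*R.r

def tr2 (H : F2) (R : M2) : F2 :=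
  ⟨Q2 H R.p R.r, Q2 H R.q R.s,
   H.a*R.p*R.q + H.b*R.r*R.s + H.d*(R.p*R.s + R.r*R.q)⟩

lemma Q2_tr (H : F2) (R : M2) (x y : ℤ) :
    Q2 (tr2 H R) x y = Q2 H (R.p*x + R.q*y) (R.r*x + R.s*y) := by
  simp only [Q2, tr2]; ring

lemma det2_tr (H : F2) (R : M2) : det2 (tr2 H R) = (detM2 R)^2 * det2 H := by
  simp only [det2, tr2, detM2, Q2]; ring

/-- going back through a unimodular transform -/
lemma rep2_transfer (H : F2) (R : M2) (hR : detM2 R = 1 ∨ detM2 R = -1) (x y : ℤ) :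
    ∃ u v : ℤ, Q2 (tr2 H R) u v = Q2 H x y := by
  have hd2 : (detM2 R)^2 = 1 := by rcases hR with h | h <;> rw [h] <;> ring
  refine ⟨detM2 R * (R.s*x - R.q*y), detM2 R * (-R.r*x + R.p*y), ?_⟩
  rw [Q2_tr]
  have e1 : R.p * (detM2 R * (R.s*x - R.q*y)) + R.q * (detM2 R * (-R.r*x + R.p*y))
      = (detM2 R)^2 * x := by simp only [detM2]; ring
  have e2 : R.r * (detM2 R * (R.s*x - R.q*y)) + R.s * (detM2 R * (-R.r*x + R.p*y))
      = (detM2 R)^2 * y := by simp only [detM2]; ring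
  rw [e1, e2, hd2, one_mul, one_mul]

lemma ne2_of_mul {R : M2} (hR : detM2 R = 1 ∨ detM2 R = -1) {x y : ℤ}
    (h : ¬(x = 0 ∧ y = 0)) : ¬(R.p*x + R.q*y = 0 ∧ R.r*x + R.s*y = 0) := by
  rintro ⟨h1, h2⟩
  apply h
  have hx : (R.p*R.s - R.q*R.r) * x = R.s * (R.p*x + R.q*y) - R.q * (R.r*x + R.s*y) := by ring
  have hy : (R.p*R.s - R.q*R.r) * y = R.p * (R.r*x + R.s*y) - R.r * (R.p*x + R.q*y) := by ring
  rw [h1, h2] at hx hy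
  simp only [detM2] at hR
  constructor <;> rcases hR with h | h <;> nlinarith [hx, hy]

def PosDef2 (H : F2) : Prop := ∀ x y : ℤ, ¬(x = 0 ∧ y = 0) → 0 < Q2 H x y

/-- existence of a minimal nonzero value of a positive definite binary form -/
lemma exists_min2 (H : F2) (hH : PosDef2 H) :
    ∃ x y : ℤ, ¬(x = 0 ∧ y = 0) ∧ ∀ u v : ℤ, ¬(u = 0 ∧ v = 0) → Q2 H x y ≤ Q2 H u v := by
  set S : Set ℕ := {k | ∃ x y : ℤ, ¬(x = 0 ∧ y = 0) ∧ Q2 H x y = (k : ℤ)} with hS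
  have hne : S.Nonempty := by
    refine ⟨(Q2 H 1 0).toNat, 1, 0, by simp, ?_⟩
    exact (Int.toNat_of_nonneg (le_of_lt (hH 1 0 (by simp)))).symm
  obtain ⟨x, y, hxy, hQ⟩ := Nat.sInf_mem hne
  refine ⟨x, y, hxy, fun u v huv => ?_⟩
  have hmem : (Q2 H u v).toNat ∈ S :=
    ⟨u, v, huv, (Int.toNat_of_nonneg (le_of_lt (hH u v huv))).symm⟩
  have := Nat.sInf_le hmem
  rw [hQ]
  have h2 : ((sInf S : ℕ) : ℤ) ≤ ((Q2 H u v).toNat : ℤ) := by exact_mod_cast this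
  exact le_trans h2 (le_of_eq (Int.toNat_of_nonneg (le_of_lt (hH u v huv))))


/-- integer rounding: we can make |m x + c| ≤ m/2 -/
lemma round_lemma (m c : ℤ) (hm : 0 < m) : ∃ x : ℤ, 4*(m*x + c)^2 ≤ m^2 := by
  rcases le_or_gt (2 * (c % m)) m with h | h
  · refine ⟨-(c / m), ?_⟩
    have hr : m * (-(c / m)) + c = c % m := by
      have := Int.mul_ediv_add_emod c m; linarith
    rw [hr]
    have h0 : 0 ≤ c % m := Int.emod_nonneg c (ne_of_gt hm)
    nlinarith
  · refine ⟨-(c / m) - 1, ?_⟩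
    have hr : m * (-(c / m) - 1) + c = c % m - m := by
      have := Int.mul_ediv_add_emod c m; linarith
    rw [hr]
    have h1 : c % m < m := Int.emod_lt_of_pos c hm
    nlinarith

/-- a minimizer of a positive definite binary form is primitive -/
lemma min2_primitive (H : F2) (hH : PosDef2 H) {x y : ℤ} (hxy : ¬(x = 0 ∧ y = 0))
    (hmin : ∀ u v : ℤ, ¬(u = 0 ∧ v = 0) → Q2 H x y ≤ Q2 H u v) :
    Int.gcd x y = 1 := by
  set g : ℕ := Int.gcd x y with hg
  have hgne : g ≠ 0 := by
    intro h0
    rw [hg] at h0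
    obtain ⟨h1, h2⟩ := Int.gcd_eq_zero_iff.mp h0
    exact hxy ⟨h1, h2⟩
  obtain ⟨x1, hx1⟩ : ((g : ℤ)) ∣ x := Int.gcd_dvd_left x y
  obtain ⟨y1, hy1⟩ : ((g : ℤ)) ∣ y := Int.gcd_dvd_right x y
  have hne1 : ¬(x1 = 0 ∧ y1 = 0) := by
    rintro ⟨h1, h2⟩; subst h1; subst h2; simp at hx1 hy1; exact hxy ⟨hx1, hy1⟩
  have hQ : Q2 H x y = (g:ℤ)^2 * Q2 H x1 y1 := by
    rw [hx1, hy1]; simp only [Q2]; ring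
  have h1 := hmin x1 y1 hne1
  have h2 := hH x1 y1 hne1
  have hgpos : (0:ℤ) < (g:ℤ) := by exact_mod_cast Nat.pos_of_ne_zero hgne
  have hsq : (g:ℤ)^2 ≤ 1 := by nlinarith [hQ, h1, h2]
  have hle : (g:ℤ) ≤ 1 := by nlinarith
  have hle' : g ≤ 1 := by exact_mod_cast hle
  omega


/-- Binary reduction: transform so top coefficient is the (small) minimum. -/
lemma binary_reduce (H : F2) (hH : PosDef2 H) :
    ∃ R : M2, detM2 R = 1 ∧ 0 < (tr2 H R).a ∧
      (∀ u v : ℤ, ¬(u = 0 ∧ v = 0) → (tr2 H R).a ≤ Q2 (tr2 H R) u v) ∧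
      3 * ((tr2 H R).a)^2 ≤ 4 * det2 H := by
  obtain ⟨x, y, hxy, hmin⟩ := exists_min2 H hH
  have hprim : Int.gcd x y = 1 := min2_primitive H hH hxy hmin
  have hbez : (1:ℤ) = x * Int.gcdA x y + y * Int.gcdB x y := by
    have := Int.gcd_eq_gcd_ab x y
    rw [hprim] at this; exact_mod_cast this
  set R : M2 := ⟨x, -(Int.gcdB x y), y, Int.gcdA x y⟩ with hR
  have hdet : detM2 R = 1 := by simp only [detM2, hR]; linarith [hbez]
  have hcol : (tr2 H R).a = Q2 H x y := rfl
  have hposmin : 0 < Q2 H x y := hH x y hxy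
  have hmin' : ∀ u v : ℤ, ¬(u = 0 ∧ v = 0) → (tr2 H R).a ≤ Q2 (tr2 H R) u v := by
    intro u v huv
    rw [Q2_tr, hcol]
    exact hmin _ _ (ne2_of_mul (Or.inl hdet) huv)
  refine ⟨R, hdet, by rw [hcol]; exact hposmin, hmin', ?_⟩
  set H' : F2 := tr2 H R with hH'
  have hdet' : det2 H' = det2 H := by
    rw [hH', det2_tr, hdet]; ring
  obtain ⟨x0, hx0⟩ := round_lemma H'.a H'.d (by rw [hH', hcol]; exact hposmin)
  have hident : H'.a * Q2 H' x0 1 = (H'.a*x0 + H'.d)^2 + det2 H' := by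
    simp only [Q2, det2]; ring
  have hge : H'.a ≤ Q2 H' x0 1 := hmin' x0 1 (by simp)
  have hapos : 0 < H'.a := by rw [hH', hcol]; exact hposmin
  nlinarith [hident, hge, hx0, hdet', hapos]


/-! ### Ternary forms: Q = a x² + b y² + c z² + 2 d x y + 2 e x z + 2 f y z -/

structure F3 where
  a : ℤ
  b : ℤ
  c : ℤ
  d : ℤ
  e : ℤ
  f : ℤ

def Q3 (A : F3) (x y z : ℤ) : ℤ :=
  A.a*x^2 + A.b*y^2 + A.c*z^2 + 2*A.d*x*y + 2*A.e*x*z + 2*A.f*y*z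

def B3 (A : F3) (x y z u v w : ℤ) : ℤ :=
  A.a*x*u + A.b*y*v + A.c*z*w + A.d*(x*v + y*u) + A.e*(x*w + z*u) + A.f*(y*w + z*v)

def det3 (A : F3) : ℤ :=
  A.a*A.b*A.c + 2*A.d*A.e*A.f - A.a*A.f^2 - A.b*A.e^2 - A.c*A.d^2

/-- 3x3 integer matrix, rows (p q r), (s t u), (v w x) -/
structure M3 where
  p : ℤ
  q : ℤ
  r : ℤ
  s : ℤ
  t : ℤ
  u : ℤ
  v : ℤ
  w : ℤ
  x : ℤ

def detM3 (P : M3) : ℤ :=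
  P.p*(P.t*P.x - P.u*P.w) - P.q*(P.s*P.x - P.u*P.v) + P.r*(P.s*P.w - P.t*P.v)

def tr3 (A : F3) (P : M3) : F3 :=
  ⟨Q3 A P.p P.s P.v, Q3 A P.q P.t P.w, Q3 A P.r P.u P.x,
   B3 A P.p P.s P.v P.q P.t P.w,
   B3 A P.p P.s P.v P.r P.u P.x,
   B3 A P.q P.t P.w P.r P.u P.x⟩

lemma Q3_tr (A : F3) (P : M3) (x y z : ℤ) :
    Q3 (tr3 A P) x y z
      = Q3 A (P.p*x + P.q*y + P.r*z) (P.s*x + P.t*y + P.u*z) (P.v*x + P.w*y + P.x*z) := by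
  simp only [Q3, tr3, B3]; ring

lemma det3_tr (A : F3) (P : M3) : det3 (tr3 A P) = (detM3 P)^2 * det3 A := by
  simp only [det3, tr3, detM3, Q3, B3]; ring

lemma rep3_transfer (A : F3) (P : M3) (hP : detM3 P = 1 ∨ detM3 P = -1) (x y z : ℤ) :
    ∃ u v w : ℤ, Q3 (tr3 A P) u v w = Q3 A x y z := by
  have hd2 : (detM3 P)^2 = 1 := by rcases hP with h | h <;> rw [h] <;> ring
  -- adjugate columns applied to (x, y, z), times det
  set D := detM3 P with hD
  refine ⟨D * ((P.t*P.x - P.u*P.w)*x - (P.q*P.x - P.r*P.w)*y + (P.q*P.u - P.r*P.t)*z),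
          D * (-(P.s*P.x - P.u*P.v)*x + (P.p*P.x - P.r*P.v)*y - (P.p*P.u - P.r*P.s)*z),
          D * ((P.s*P.w - P.t*P.v)*x - (P.p*P.w - P.q*P.v)*y + (P.p*P.t - P.q*P.s)*z), ?_⟩
  rw [Q3_tr]
  have e1 : P.p*(D * ((P.t*P.x - P.u*P.w)*x - (P.q*P.x - P.r*P.w)*y + (P.q*P.u - P.r*P.t)*z))
      + P.q*(D * (-(P.s*P.x - P.u*P.v)*x + (P.p*P.x - P.r*P.v)*y - (P.p*P.u - P.r*P.s)*z))
      + P.r*(D * ((P.s*P.w - P.t*P.v)*x - (P.p*P.w - P.q*P.v)*y + (P.p*P.t - P.q*P.s)*z))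
      = D^2 * x := by simp only [hD, detM3]; ring
  have e2 : P.s*(D * ((P.t*P.x - P.u*P.w)*x - (P.q*P.x - P.r*P.w)*y + (P.q*P.u - P.r*P.t)*z))
      + P.t*(D * (-(P.s*P.x - P.u*P.v)*x + (P.p*P.x - P.r*P.v)*y - (P.p*P.u - P.r*P.s)*z))
      + P.u*(D * ((P.s*P.w - P.t*P.v)*x - (P.p*P.w - P.q*P.v)*y + (P.p*P.t - P.q*P.s)*z))
      = D^2 * y := by simp only [hD, detM3]; ring
  have e3 : P.v*(D * ((P.t*P.x - P.u*P.w)*x - (P.q*P.x - P.r*P.w)*y + (P.q*P.u - P.r*P.t)*z))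
      + P.w*(D * (-(P.s*P.x - P.u*P.v)*x + (P.p*P.x - P.r*P.v)*y - (P.p*P.u - P.r*P.s)*z))
      + P.x*(D * ((P.s*P.w - P.t*P.v)*x - (P.p*P.w - P.q*P.v)*y + (P.p*P.t - P.q*P.s)*z))
      = D^2 * z := by simp only [hD, detM3]; ring
  rw [e1, e2, e3, hd2, one_mul, one_mul, one_mul]

lemma ne3_of_mul {P : M3} (hP : detM3 P = 1 ∨ detM3 P = -1) {x y z : ℤ}
    (h : ¬(x = 0 ∧ y = 0 ∧ z = 0)) :
    ¬(P.p*x + P.q*y + P.r*z = 0 ∧ P.s*x + P.t*y + P.u*z = 0 ∧ P.v*x + P.w*y + P.x*z = 0) := by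
  rintro ⟨h1, h2, h3⟩
  apply h
  have hx : detM3 P * x = (P.t*P.x - P.u*P.w)*(P.p*x + P.q*y + P.r*z)
      - (P.q*P.x - P.r*P.w)*(P.s*x + P.t*y + P.u*z)
      + (P.q*P.u - P.r*P.t)*(P.v*x + P.w*y + P.x*z) := by simp only [detM3]; ring
  have hy : detM3 P * y = -(P.s*P.x - P.u*P.v)*(P.p*x + P.q*y + P.r*z)
      + (P.p*P.x - P.r*P.v)*(P.s*x + P.t*y + P.u*z)
      - (P.p*P.u - P.r*P.s)*(P.v*x + P.w*y + P.x*z) := by simp only [detM3]; ring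
  have hz : detM3 P * z = (P.s*P.w - P.t*P.v)*(P.p*x + P.q*y + P.r*z)
      - (P.p*P.w - P.q*P.v)*(P.s*x + P.t*y + P.u*z)
      + (P.p*P.t - P.q*P.s)*(P.v*x + P.w*y + P.x*z) := by simp only [detM3]; ring
  rw [h1, h2, h3] at hx hy hz
  refine ⟨?_, ?_, ?_⟩ <;> rcases hP with h' | h' <;> rw [h'] at hx hy hz <;> linarith

def PosDef3 (A : F3) : Prop := ∀ x y z : ℤ, ¬(x = 0 ∧ y = 0 ∧ z = 0) → 0 < Q3 A x y z

lemma exists_min3 (A : F3) (hA : PosDef3 A) :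
    ∃ x y z : ℤ, ¬(x = 0 ∧ y = 0 ∧ z = 0) ∧
      ∀ u v w : ℤ, ¬(u = 0 ∧ v = 0 ∧ w = 0) → Q3 A x y z ≤ Q3 A u v w := by
  set S : Set ℕ := {k | ∃ x y z : ℤ, ¬(x = 0 ∧ y = 0 ∧ z = 0) ∧ Q3 A x y z = (k : ℤ)} with hS
  have hne : S.Nonempty := by
    refine ⟨(Q3 A 1 0 0).toNat, 1, 0, 0, by simp, ?_⟩
    exact (Int.toNat_of_nonneg (le_of_lt (hA 1 0 0 (by simp)))).symm
  obtain ⟨x, y, z, hxyz, hQ⟩ := Nat.sInf_mem hne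
  refine ⟨x, y, z, hxyz, fun u v w huvw => ?_⟩
  have hmem : (Q3 A u v w).toNat ∈ S :=
    ⟨u, v, w, huvw, (Int.toNat_of_nonneg (le_of_lt (hA u v w huvw))).symm⟩
  have h1 := Nat.sInf_le hmem
  rw [hQ]
  have h2 : ((sInf S : ℕ) : ℤ) ≤ ((Q3 A u v w).toNat : ℤ) := by exact_mod_cast h1
  exact le_trans h2 (le_of_eq (Int.toNat_of_nonneg (le_of_lt (hA u v w huvw))))

lemma min3_primitive (A : F3) (hA : PosDef3 A) {x y z : ℤ} (hxyz : ¬(x = 0 ∧ y = 0 ∧ z = 0))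
    (hmin : ∀ u v w : ℤ, ¬(u = 0 ∧ v = 0 ∧ w = 0) → Q3 A x y z ≤ Q3 A u v w) :
    Int.gcd (Int.gcd x y : ℤ) z = 1 := by
  set g : ℕ := Int.gcd (Int.gcd x y : ℤ) z with hg
  have hgne : g ≠ 0 := by
    intro h0
    rw [hg] at h0
    obtain ⟨h1, h2⟩ := Int.gcd_eq_zero_iff.mp h0
    have h3 : Int.gcd x y = 0 := by exact_mod_cast h1
    obtain ⟨h4, h5⟩ := Int.gcd_eq_zero_iff.mp h3
    exact hxyz ⟨h4, h5, h2⟩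
  obtain ⟨x1, hx1⟩ : ((g : ℤ)) ∣ x :=
    dvd_trans (Int.gcd_dvd_left (Int.gcd x y : ℤ) z) (Int.gcd_dvd_left x y)
  obtain ⟨y1, hy1⟩ : ((g : ℤ)) ∣ y :=
    dvd_trans (Int.gcd_dvd_left (Int.gcd x y : ℤ) z) (Int.gcd_dvd_right x y)
  obtain ⟨z1, hz1⟩ : ((g : ℤ)) ∣ z := Int.gcd_dvd_right (Int.gcd x y : ℤ) z
  have hne1 : ¬(x1 = 0 ∧ y1 = 0 ∧ z1 = 0) := by
    rintro ⟨h1, h2, h3⟩; subst h1; subst h2; subst h3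
    simp at hx1 hy1 hz1
    exact hxyz ⟨hx1, hy1, hz1⟩
  have hQ : Q3 A x y z = (g:ℤ)^2 * Q3 A x1 y1 z1 := by
    rw [hx1, hy1, hz1]; simp only [Q3]; ring
  have h1 := hmin x1 y1 z1 hne1
  have h2 := hA x1 y1 z1 hne1
  have hgpos : (0:ℤ) < (g:ℤ) := by exact_mod_cast Nat.pos_of_ne_zero hgne
  have hsq : (g:ℤ)^2 ≤ 1 := by nlinarith [hQ, h1, h2]
  have hle : (g:ℤ) ≤ 1 := by nlinarith
  have hle' : g ≤ 1 := by exact_mod_cast hle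
  omega


/-- a primitive integer vector is the first column of a unimodular matrix -/
lemma exists_unimod_col3 (x y z : ℤ) (h : Int.gcd (Int.gcd x y : ℤ) z = 1) :
    ∃ P : M3, detM3 P = 1 ∧ P.p = x ∧ P.s = y ∧ P.v = z := by
  rcases Nat.eq_zero_or_pos (Int.gcd x y) with hg0 | hgpos
  · -- x = y = 0, z = ±1
    obtain ⟨hx0, hy0⟩ := Int.gcd_eq_zero_iff.mp hg0
    subst hx0; subst hy0
    rw [hg0] at h
    simp only [Nat.cast_zero, Int.gcd] at h
    -- Int.gcd 0 z = z.natAbs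
    have hz : z.natAbs = 1 := by simpa using h
    rcases Int.natAbs_eq_iff.mp hz with hz1 | hz1
    · exact ⟨⟨0, 1, 0, 0, 0, 1, z, 0, 0⟩, by simp only [detM3]; rw [hz1]; ring, rfl, rfl, rfl⟩
    · exact ⟨⟨0, 1, 0, 0, 0, -1, z, 0, 0⟩, by simp only [detM3]; rw [hz1]; ring, rfl, rfl, rfl⟩
  · set g : ℕ := Int.gcd x y with hg
    obtain ⟨x1, hx1⟩ : ((g : ℤ)) ∣ x := Int.gcd_dvd_left x y
    obtain ⟨y1, hy1⟩ : ((g : ℤ)) ∣ y := Int.gcd_dvd_right x y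
    have hbez1 : (g : ℤ) = x * Int.gcdA x y + y * Int.gcdB x y := Int.gcd_eq_gcd_ab x y
    set α := Int.gcdA x y with hα
    set β := Int.gcdB x y with hβ
    have hbez2 : (1 : ℤ) = (g:ℤ) * Int.gcdA (g:ℤ) z + z * Int.gcdB (g:ℤ) z := by
      have := Int.gcd_eq_gcd_ab (g:ℤ) z
      rw [h] at this; exact_mod_cast this
    set s0 := Int.gcdA (g:ℤ) z with hs0
    set t0 := Int.gcdB (g:ℤ) z with ht0
    have hgz : (g:ℤ) ≠ 0 := by
      have : g ≠ 0 := Nat.pos_iff_ne_zero.mp hgpos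
      exact_mod_cast this
    refine ⟨⟨x, -β, -t0*x1, y, α, -t0*y1, z, 0, s0⟩, ?_, rfl, rfl, rfl⟩
    have hunit : x1 * α + y1 * β = 1 := by
      have h1 : (g:ℤ) * (x1 * α + y1 * β) = x * α + y * β := by rw [hx1, hy1]; ring
      have hgg : (g:ℤ) * (x1 * α + y1 * β) = (g:ℤ) * 1 := by
        rw [mul_one, h1, ← hbez1]
      exact mul_left_cancel₀ hgz hgg
    simp only [detM3]
    have expand : x*(α*s0 - (-t0*y1)*0) - (-β)*(y*s0 - (-t0*y1)*z) + (-t0*x1)*(y*0 - α*z)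
        = s0 * (x*α + y*β) + t0 * z * (x1*α + y1*β) := by
      rw [hx1, hy1]; ring
    rw [expand, hunit, ← hbez1]
    linarith [hbez2]


lemma posdef3_tr (A : F3) (P : M3) (hA : PosDef3 A) (hP : detM3 P = 1 ∨ detM3 P = -1) :
    PosDef3 (tr3 A P) := by
  intro x y z h
  rw [Q3_tr]
  exact hA _ _ _ (ne3_of_mul hP h)

lemma detM3_emb (R : M2) : detM3 ⟨1,0,0,0,R.p,R.q,0,R.r,R.s⟩ = detM2 R := by
  simp only [detM3, detM2]; ring

lemma tr3_emb (C : F3) (R : M2) (hd : C.d = 0) (he : C.e = 0) :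
    tr3 C ⟨1,0,0,0,R.p,R.q,0,R.r,R.s⟩ =
      ⟨C.a, (tr2 ⟨C.b,C.c,C.f⟩ R).a, (tr2 ⟨C.b,C.c,C.f⟩ R).b, 0, 0,
       (tr2 ⟨C.b,C.c,C.f⟩ R).d⟩ := by
  simp only [tr3, tr2, Q3, Q2, B3, F3.mk.injEq]
  refine ⟨?_, ?_, ?_, ?_, ?_, ?_⟩ <;> rw [hd, he] <;> ring

lemma tr3_a (A : F3) (P : M3) : (tr3 A P).a = Q3 A P.p P.s P.v := rfl
lemma tr3_d (A : F3) (P : M3) : (tr3 A P).d = B3 A P.p P.s P.v P.q P.t P.w := rfl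
lemma tr3_e (A : F3) (P : M3) : (tr3 A P).e = B3 A P.p P.s P.v P.r P.u P.x := rfl
lemma tr2_a (H : F2) (R : M2) : (tr2 H R).a = Q2 H R.p R.r := rfl
lemma tr2_d (H : F2) (R : M2) :
    (tr2 H R).d = H.a*R.p*R.q + H.b*R.r*R.s + H.d*(R.p*R.s + R.r*R.q) := rfl

/-- Main reduction theorem: a positive definite ternary form with determinant 1
represents only sums of three squares. -/
theorem sum_three_squares_of_unimodular (A : F3) (hA : PosDef3 A) (hdet : det3 A = 1)
    (w1 w2 w3 : ℤ) : ∃ x y z : ℤ, x^2 + y^2 + z^2 = Q3 A w1 w2 w3 := by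
  classical
  -- Step 1: bring the minimum to the top-left corner
  obtain ⟨x0, y0, z0, hne0, hmin0⟩ := exists_min3 A hA
  have hprim := min3_primitive A hA hne0 hmin0
  obtain ⟨P1, hdP1, hp, hs, hv⟩ := exists_unimod_col3 x0 y0 z0 hprim
  obtain ⟨B, hB⟩ : ∃ B, B = tr3 A P1 := ⟨_, rfl⟩
  have hBpos : PosDef3 B := hB ▸ posdef3_tr A P1 hA (Or.inl hdP1)
  have hdetB : det3 B = 1 := by rw [hB, det3_tr, hdP1, hdet]; ring
  have hBa : B.a = Q3 A x0 y0 z0 := by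
    rw [hB, tr3_a, hp, hs, hv]
  have hmpos : 0 < B.a := by
    rw [hBa]; exact hA x0 y0 z0 hne0
  have hBmin : ∀ u v w : ℤ, ¬(u = 0 ∧ v = 0 ∧ w = 0) → B.a ≤ Q3 B u v w := by
    intro u v w huvw
    rw [hB, Q3_tr, ← hB, hBa]
    exact hmin0 _ _ _ (ne3_of_mul (Or.inl hdP1) huvw)
  -- Step 2: Schur complement
  obtain ⟨H, hH⟩ : ∃ H : F2, H = ⟨B.a*B.b - B.d^2, B.a*B.c - B.e^2, B.a*B.f - B.d*B.e⟩ :=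
    ⟨_, rfl⟩
  have hSchur : ∀ x y z : ℤ,
      B.a * Q3 B x y z = (B.a*x + B.d*y + B.e*z)^2 + Q2 H y z := by
    intro x y z; rw [hH]; simp only [Q3, Q2]; ring
  have hdetH1 : det2 H = B.a := by
    have h0 : det2 H = B.a * det3 B := by rw [hH]; simp only [det2, det3]; ring
    rw [h0, hdetB]; ring
  have hHlower : ∀ y z : ℤ, ¬(y = 0 ∧ z = 0) → 3*(B.a)^2 ≤ 4 * Q2 H y z := by
    intro y z hyz
    obtain ⟨xr, hxr⟩ := round_lemma B.a (B.d*y + B.e*z) hmpos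
    have h1 : B.a ≤ Q3 B xr y z := by
      apply hBmin
      rintro ⟨_, h2', h3'⟩; exact hyz ⟨h2', h3'⟩
    have h2 := hSchur xr y z
    nlinarith [h1, h2, hxr, hmpos]
  have hHpos : PosDef2 H := by
    intro y z hyz
    nlinarith [hHlower y z hyz, hmpos]
  -- Step 3: the minimum is 1
  obtain ⟨R, hdR, hRapos, hRmin, hR3⟩ := binary_reduce H hHpos
  have hRlow : 3*(B.a)^2 ≤ 4 * (tr2 H R).a := by
    have hcolne : ¬(R.p = 0 ∧ R.r = 0) := by
      rintro ⟨h1, h2⟩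
      rw [detM2, h1, h2] at hdR
      simp at hdR
    rw [tr2_a]
    exact hHlower R.p R.r hcolne
  have hBa1 : B.a = 1 := by
    rw [hdetH1] at hR3
    have h1 : (1:ℤ) ≤ B.a := hmpos
    have h2 : (1:ℤ) ≤ (tr2 H R).a := hRapos
    nlinarith [hRlow, hR3, h1, h2]
  -- Step 4: clear the first row
  obtain ⟨P2, hP2⟩ : ∃ P2 : M3, P2 = ⟨1, -B.d, -B.e, 0, 1, 0, 0, 0, 1⟩ := ⟨_, rfl⟩
  have hdP2 : detM3 P2 = 1 := by rw [hP2]; simp only [detM3]; ring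
  obtain ⟨C, hC⟩ : ∃ C, C = tr3 B P2 := ⟨_, rfl⟩
  have hCpos : PosDef3 C := hC ▸ posdef3_tr B P2 hBpos (Or.inl hdP2)
  have hdetC : det3 C = 1 := by rw [hC, det3_tr, hdP2, hdetB]; ring
  have hCa : C.a = 1 := by
    rw [hC, tr3_a, hP2]
    simp only [Q3]
    rw [hBa1]; ring
  have hCd : C.d = 0 := by
    rw [hC, tr3_d, hP2]
    simp only [B3]
    rw [hBa1]; ring
  have hCe : C.e = 0 := by
    rw [hC, tr3_e, hP2]
    simp only [B3]
    rw [hBa1]; ring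
  -- Step 5: the binary part
  obtain ⟨H2, hH2⟩ : ∃ H2 : F2, H2 = ⟨C.b, C.c, C.f⟩ := ⟨_, rfl⟩
  have hdetH2 : det2 H2 = 1 := by
    have h0 : det2 H2 = det3 C := by
      rw [hH2]; simp only [det2, det3]
      rw [hCa, hCd, hCe]; ring
    rw [h0, hdetC]
  have hH2pos : PosDef2 H2 := by
    intro y z hyz
    have h1 : Q2 H2 y z = Q3 C 0 y z := by rw [hH2]; simp only [Q2, Q3]; ring
    rw [h1]
    exact hCpos 0 y z (by rintro ⟨_, h2', h3'⟩; exact hyz ⟨h2', h3'⟩)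
  obtain ⟨R2, hdR2, hR2apos, hR2min, hR23⟩ := binary_reduce H2 hH2pos
  obtain ⟨H2', hH2'⟩ : ∃ H2', H2' = tr2 H2 R2 := ⟨_, rfl⟩
  have hH2'a : H2'.a = 1 := by
    rw [hdetH2] at hR23
    rw [← hH2'] at hR23 hR2apos
    have h2 : (1:ℤ) ≤ H2'.a := hR2apos
    nlinarith [hR23, h2]
  have hdetH2' : det2 H2' = 1 := by
    rw [hH2', det2_tr, hdR2, hdetH2]; ring
  obtain ⟨R3, hR3'⟩ : ∃ R3 : M2, R3 = ⟨1, -H2'.d, 0, 1⟩ := ⟨_, rfl⟩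
  have hdR3 : detM2 R3 = 1 := by rw [hR3']; simp only [detM2]; ring
  obtain ⟨H3, hH3⟩ : ∃ H3, H3 = tr2 H2' R3 := ⟨_, rfl⟩
  have hH3a : H3.a = 1 := by
    rw [hH3, tr2_a, hR3']
    simp only [Q2]
    rw [hH2'a]; ring
  have hH3d : H3.d = 0 := by
    rw [hH3, tr2_d, hR3']
    simp only []
    rw [hH2'a]; ring
  have hH3b : H3.b = 1 := by
    have h1 : det2 H3 = 1 := by rw [hH3, det2_tr, hdR3, hdetH2']; ring
    rw [det2, hH3a, hH3d] at h1
    linarith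
  -- Step 6: chain the representation transfers
  obtain ⟨u1, v1, w1', h1⟩ := rep3_transfer A P1 (Or.inl hdP1) w1 w2 w3
  rw [← hB] at h1
  obtain ⟨u2, v2, w2', h2⟩ := rep3_transfer B P2 (Or.inl hdP2) u1 v1 w1'
  rw [← hC] at h2
  obtain ⟨E2, hE2⟩ : ∃ E2 : M3, E2 = ⟨1,0,0,0,R2.p,R2.q,0,R2.r,R2.s⟩ := ⟨_, rfl⟩
  have hdE2 : detM3 E2 = 1 := by rw [hE2, detM3_emb, hdR2]
  obtain ⟨u3, v3, w3', h3⟩ := rep3_transfer C E2 (Or.inl hdE2) u2 v2 w2'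
  have hCE2 : tr3 C E2 = ⟨C.a, H2'.a, H2'.b, 0, 0, H2'.d⟩ := by
    rw [hE2, tr3_emb C R2 hCd hCe, ← hH2, ← hH2']
  rw [hCE2] at h3
  obtain ⟨E3, hE3⟩ : ∃ E3 : M3, E3 = ⟨1,0,0,0,R3.p,R3.q,0,R3.r,R3.s⟩ := ⟨_, rfl⟩
  have hdE3 : detM3 E3 = 1 := by rw [hE3, detM3_emb, hdR3]
  obtain ⟨u4, v4, w4', h4⟩ :=
    rep3_transfer ⟨C.a, H2'.a, H2'.b, 0, 0, H2'.d⟩ E3 (Or.inl hdE3) u3 v3 w3'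
  have hCE3 : tr3 (⟨C.a, H2'.a, H2'.b, 0, 0, H2'.d⟩ : F3) E3 =
      ⟨C.a, H3.a, H3.b, 0, 0, H3.d⟩ := by
    rw [hE3, tr3_emb ⟨C.a, H2'.a, H2'.b, 0, 0, H2'.d⟩ R3 rfl rfl, ← hH3]
  rw [hCE3] at h4
  refine ⟨u4, v4, w4', ?_⟩
  rw [← h1, ← h2, ← h3, ← h4]
  simp only [Q3]
  rw [hCa, hH3a, hH3b, hH3d]; ring


/-! ### Arithmetic: every 8m+3 is a sum of three squares -/

theorem sum_three_squares_8m3 (m : ℕ) :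
    ∃ x y z : ℤ, x^2 + y^2 + z^2 = 8*(m:ℤ) + 3 := by
  classical
  obtain ⟨n, hn⟩ : ∃ n : ℕ, n = 8*m + 3 := ⟨_, rfl⟩
  obtain ⟨k, hk⟩ : ∃ k : ℕ, k = 4*m + 1 := ⟨_, rfl⟩
  have hn2k : n = 1 + 2*k := by omega
  have hnodd : Odd n := ⟨4*m+1, by omega⟩
  have hkcop : Nat.Coprime k (4*n) := by
    have h1 : Nat.Coprime k 4 := by
      have : Nat.gcd k 4 = 1 := by
        have h := Nat.gcd_add_mul_right_left 1 4 m
        simpa [hk, show 1 + m*4 = 4*m+1 by omega] using h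
      exact this
    have h2 : Nat.Coprime k n := by
      have : Nat.gcd k (1 + 2*k) = 1 := by
        have h := Nat.gcd_add_mul_right_right k 1 2
        simpa using h
      rw [Nat.Coprime, hn2k]; exact this
    exact Nat.Coprime.mul_right h1 h2
  have hn0 : n ≠ 0 := by omega
  haveI : NeZero (4*n) := ⟨by omega⟩
  have hkunit : IsUnit ((k : ZMod (4*n))) := (ZMod.isUnit_iff_coprime k (4*n)).mpr hkcop
  obtain ⟨p, hpgt, hpprime, hpmod⟩ := Nat.forall_exists_prime_gt_and_eq_mod hkunit (4*n)
  haveI : Fact p.Prime := ⟨hpprime⟩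
  have hmodeq : p ≡ k [MOD 4*n] := (ZMod.natCast_eq_natCast_iff p k (4*n)).mp hpmod
  have hp4 : p % 4 = 1 := by
    have h4 : p ≡ k [MOD 4] := hmodeq.of_dvd ⟨n, rfl⟩
    have : p % 4 = k % 4 := h4
    omega
  have hpodd : Odd p := by
    rcases hpprime.eq_two_or_odd' with h2 | hodd
    · omega
    · exact hodd
  have hppos : 0 < p := hpprime.pos
  -- n divides 2p+1
  have hndvd : n ∣ 2*p + 1 := by
    have hmn : p ≡ k [MOD n] := hmodeq.of_dvd ⟨4, by ring⟩
    have h1 : 2*p + 1 ≡ 2*k + 1 [MOD n] := ((hmn.mul_left 2).add_right 1)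
    have h2 : 2*k + 1 ≡ 0 [MOD n] := by
      have : n ∣ 2*k+1 := ⟨1, by omega⟩
      exact (Nat.modEq_zero_iff_dvd).mpr this
    exact (Nat.modEq_zero_iff_dvd).mp (h1.trans h2)
  obtain ⟨D, hD⟩ : ∃ D : ℕ, D = (2*p+1) / n := ⟨_, rfl⟩
  have hnD : n * D = 2*p + 1 := by rw [hD]; exact Nat.mul_div_cancel' hndvd
  have hDodd : Odd D := by
    have : Odd (n * D) := by rw [hnD]; exact ⟨p, by omega⟩
    exact (Nat.odd_mul.mp this).2
  have hDpos : 0 < D := by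
    rcases Nat.eq_zero_or_pos D with h | h
    · rw [h, Nat.mul_zero] at hnD; omega
    · exact h
  have hpn : ¬ (p ∣ n) := by
    intro hdvd
    have h2 : p ∣ 2*p+1 := by
      rw [← hnD]
      exact Dvd.dvd.mul_right hdvd D
    have h3 : p ∣ 2*p := ⟨2, by ring⟩
    have h4 : p ∣ 1 := by
      have := Nat.dvd_sub h2 h3
      simpa using this
    have := Nat.le_of_dvd one_pos h4
    have := hpprime.two_le
    omega
  have hpD : ¬ ((p:ℤ) ∣ (D:ℤ)) := by
    intro hdvd
    have h1 : (p:ℤ) ∣ (n:ℤ)*(D:ℤ) := Dvd.dvd.mul_left hdvd n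
    have h2 : (n:ℤ)*(D:ℤ) = 2*p+1 := by exact_mod_cast hnD
    have h3 : (p:ℤ) ∣ 1 := by
      have h4 : (p:ℤ) ∣ 2*p+1 := h2 ▸ h1
      have h5 : (p:ℤ) ∣ 2*p := ⟨2, by ring⟩
      simpa using dvd_sub h4 h5
    have := Int.le_of_dvd one_pos h3
    have := hpprime.two_le
    omega
  -- Jacobi symbol computations
  have hn8 : n % 8 = 3 := by omega
  have hn4 : n % 4 = 3 := by omega
  have hJ2 : jacobiSym 2 n = -1 := by
    rw [jacobiSym.at_two hnodd, ZMod.χ₈_nat_eq_if_mod_eight]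
    rw [if_neg (by omega), if_neg (by omega)]
  have hJneg1 : jacobiSym (-1) n = -1 := by
    rw [jacobiSym.at_neg_one hnodd, ZMod.χ₄_nat_eq_if_mod_four]
    rw [if_neg (by omega), if_neg (by omega)]
  have hmod2p : ((2*(p:ℤ)) % (n:ℤ)) = ((-1 : ℤ) % (n:ℤ)) := by
    have : (n:ℤ) ∣ (-1) - 2*(p:ℤ) := by
      have h2 : (n:ℤ)*(D:ℤ) = 2*(p:ℤ)+1 := by exact_mod_cast hnD
      exact ⟨-(D:ℤ), by linarith⟩
    exact Int.ModEq.symm (Int.modEq_iff_dvd.mpr this) ▸ rfl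
  have hJp : jacobiSym (p:ℤ) n = 1 := by
    have h1 : jacobiSym (2*(p:ℤ)) n = jacobiSym (-1) n := by
      rw [jacobiSym.mod_left (2*(p:ℤ)) n, jacobiSym.mod_left (-1 : ℤ) n, hmod2p]
    rw [jacobiSym.mul_left, hJ2, hJneg1] at h1
    linarith
  have hJnp : jacobiSym (n:ℤ) p = 1 := by
    have := jacobiSym.quadratic_reciprocity_one_mod_four hp4 hnodd
    rw [← this]; exact hJp
  have hJD : jacobiSym (D:ℤ) p = 1 := by
    have h1 : jacobiSym ((n:ℤ)*(D:ℤ)) p = 1 := by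
      have h2 : ((n:ℤ)*(D:ℤ)) % (p:ℤ) = (1:ℤ) % (p:ℤ) := by
        have h3 : (p:ℤ) ∣ 1 - (n:ℤ)*(D:ℤ) := by
          have h4 : (n:ℤ)*(D:ℤ) = 2*(p:ℤ)+1 := by exact_mod_cast hnD
          exact ⟨-2, by linarith⟩
        exact Int.ModEq.symm (Int.modEq_iff_dvd.mpr h3) ▸ rfl
      rw [jacobiSym.mod_left ((n:ℤ)*(D:ℤ)) p, h2, ← jacobiSym.mod_left, jacobiSym.one_left]
    rw [jacobiSym.mul_left, hJnp, one_mul] at h1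
    exact h1
  have hJnegD : jacobiSym (-(D:ℤ)) p = 1 := by
    have h1 : jacobiSym ((-1) * (D:ℤ)) p = jacobiSym (-1 : ℤ) p * jacobiSym (D:ℤ) p :=
      jacobiSym.mul_left _ _ _
    have h2 : jacobiSym (-1 : ℤ) p = 1 := by
      rw [jacobiSym.at_neg_one hpodd, ZMod.χ₄_nat_eq_if_mod_four]
      rw [if_neg (by omega), if_pos hp4]
    rw [neg_one_mul] at h1
    rw [h1, h2, hJD]; ring
  -- a square root of -D mod p, then mod 2p
  have hsq : IsSquare ((-(D:ℤ) : ℤ) : ZMod p) := ZMod.isSquare_of_jacobiSym_eq_one hJnegD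
  obtain ⟨r, hr⟩ := hsq
  haveI : NeZero p := ⟨hpprime.ne_zero⟩
  have hk0 : (p:ℤ) ∣ ((r.val : ℤ)^2 + (D:ℤ)) := by
    have hDcast : ((D:ℕ) : ZMod p) = -(r*r) := by
      have h2 := hr
      push_cast at h2
      linear_combination -h2
    have h1 : (((r.val : ℤ)^2 + (D:ℤ) : ℤ) : ZMod p) = 0 := by
      push_cast
      rw [ZMod.natCast_val, ZMod.cast_id, hDcast]
      ring
    exact (ZMod.intCast_zmod_eq_zero_iff_dvd _ _).mp h1
  -- choose an odd representative h0
  obtain ⟨h0, hh0odd, hh0⟩ : ∃ h0 : ℤ, Odd h0 ∧ (p:ℤ) ∣ (h0^2 + (D:ℤ)) := by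
    rcases Int.even_or_odd (r.val : ℤ) with heven | hodd
    · refine ⟨(r.val : ℤ) + p, ?_, ?_⟩
      · rcases hpodd with ⟨j, hj⟩
        rcases heven with ⟨i, hi⟩
        exact ⟨i + j, by push_cast [hj]; linarith⟩
      · have : ((r.val : ℤ) + p)^2 + (D:ℤ)
            = ((r.val : ℤ)^2 + (D:ℤ)) + p*(2*(r.val : ℤ) + p) := by ring
        rw [this]
        exact dvd_add hk0 ⟨2*(r.val : ℤ) + p, rfl⟩
    · exact ⟨(r.val : ℤ), hodd, hk0⟩
  have h2dvd : (2:ℤ) ∣ (h0^2 + (D:ℤ)) := by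
    rcases hh0odd with ⟨i, hi⟩
    rcases hDodd with ⟨j, hj⟩
    refine ⟨2*i^2 + 2*i + j + 1, ?_⟩
    rw [hi]; push_cast [hj]; ring
  have hcop2p : IsCoprime (2:ℤ) (p:ℤ) := by
    rw [Int.isCoprime_iff_gcd_eq_one]
    have h1 : Nat.Coprime 2 p := Nat.coprime_two_left.mpr hpodd
    have h2 : Int.gcd (2:ℤ) (p:ℤ) = Nat.gcd 2 p := rfl
    rw [h2]; exact h1
  have h2pdvd : (2*(p:ℤ)) ∣ (h0^2 + (D:ℤ)) := hcop2p.mul_dvd h2dvd hh0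
  obtain ⟨a, ha⟩ : ∃ a : ℤ, a = (h0^2 + (D:ℤ)) / (2*(p:ℤ)) := ⟨_, rfl⟩
  have haeq : 2*(p:ℤ)*a = h0^2 + (D:ℤ) := by rw [ha]; exact Int.mul_ediv_cancel' h2pdvd
  have hapos : 0 < a := by
    have hD1 : (1:ℤ) ≤ (D:ℤ) := by exact_mod_cast hDpos
    nlinarith [sq_nonneg h0, haeq, hppos]
  -- the ternary form
  obtain ⟨A, hA⟩ : ∃ A : F3, A = ⟨a, 2*(p:ℤ), (n:ℤ), h0, 1, 0⟩ := ⟨_, rfl⟩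
  have hnDz : (n:ℤ)*(D:ℤ) = 2*(p:ℤ)+1 := by exact_mod_cast hnD
  have hdetA : det3 A = 1 := by
    rw [hA]; simp only [det3]
    linear_combination (n:ℤ)*haeq + hnDz
  obtain ⟨E, hE⟩ : ∃ E : ℤ, E = 2*(p:ℤ)*a - h0^2 := ⟨_, rfl⟩
  have hEeqD : E = (D:ℤ) := by rw [hE]; linarith [haeq]
  have hEpos : 0 < E := by rw [hEeqD]; exact_mod_cast hDpos
  have hident : ∀ x y z : ℤ,
      a*E*(Q3 A x y z) = E*(a*x+h0*y+z)^2 + (E*y - h0*z)^2 + a*z^2 := by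
    intro x y z
    have h1 : a*E*(Q3 A x y z)
        = E*(a*x+h0*y+z)^2 + (E*y - h0*z)^2 + a*(det3 A)*z^2 := by
      rw [hA, hE]; simp only [Q3, det3]; ring
    rw [h1, hdetA]; ring
  have hposA : PosDef3 A := by
    intro x y z hne
    have key : 0 < a*E*(Q3 A x y z) := by
      rw [hident x y z]
      by_cases hz : z = 0
      · by_cases hy : y = 0
        · have hx : x ≠ 0 := by
            intro hx; exact hne ⟨hx, hy, hz⟩
          subst hz; subst hy
          have hrw : E*(a*x+h0*0+0)^2 + (E*0 - h0*0)^2 + a*0^2 = E*(a*x)^2 := by ring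
          rw [hrw]
          have hax : a*x ≠ 0 := mul_ne_zero (ne_of_gt hapos) hx
          have h2 : (a*x)^2 ≠ 0 := pow_ne_zero 2 hax
          have h2' : 0 < (a*x)^2 := lt_of_le_of_ne (sq_nonneg _) (Ne.symm h2)
          exact mul_pos hEpos h2'
        · subst hz
          have hrw : E*(a*x+h0*y+0)^2 + (E*y - h0*0)^2 + a*0^2
              = E*(a*x+h0*y)^2 + (E*y)^2 := by ring
          rw [hrw]
          have h1 : 0 ≤ E*(a*x+h0*y)^2 := mul_nonneg (le_of_lt hEpos) (sq_nonneg _)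
          have h2 : (E*y)^2 ≠ 0 := pow_ne_zero 2 (mul_ne_zero (ne_of_gt hEpos) hy)
          have h2' : 0 < (E*y)^2 := lt_of_le_of_ne (sq_nonneg _) (Ne.symm h2)
          linarith
      · have h1 : 0 ≤ E*(a*x+h0*y+z)^2 := mul_nonneg (le_of_lt hEpos) (sq_nonneg _)
        have h2 : 0 ≤ (E*y - h0*z)^2 := sq_nonneg _
        have h3 : z^2 ≠ 0 := pow_ne_zero 2 hz
        have h3' : 0 < z^2 := lt_of_le_of_ne (sq_nonneg _) (Ne.symm h3)
        have h4 : 0 < a*z^2 := mul_pos hapos h3'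
        linarith
    by_contra hcon
    push_neg at hcon
    have h3 : a*E*(Q3 A x y z) ≤ 0 :=
      mul_nonpos_of_nonneg_of_nonpos (le_of_lt (mul_pos hapos hEpos)) hcon
    linarith [key]
  obtain ⟨x, y, z, hxyz⟩ := sum_three_squares_of_unimodular A hposA hdetA 0 0 1
  refine ⟨x, y, z, ?_⟩
  rw [hxyz, hA]
  simp only [Q3]
  have : ((n:ℕ) : ℤ) = 8*(m:ℤ)+3 := by rw [hn]; push_cast; ring
  linarith [this]

lemma odd3 {x y z M : ℤ} (h : x^2 + y^2 + z^2 = 8*M + 3) : Odd x ∧ Odd y ∧ Odd z := by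
  rcases Int.even_or_odd x with ⟨u, hu⟩ | hox <;>
    rcases Int.even_or_odd y with ⟨v, hv⟩ | hoy <;>
      rcases Int.even_or_odd z with ⟨w, hw⟩ | hoz
  · exfalso
    rw [hu, hv, hw] at h
    obtain ⟨S, hS⟩ : ∃ S : ℤ, S = u^2+v^2+w^2 := ⟨_, rfl⟩
    have h4 : 4*S = 8*M + 3 := by rw [hS]; linear_combination h
    omega
  · exfalso
    obtain ⟨w, hw⟩ := hoz
    rw [hu, hv, hw] at h
    obtain ⟨S, hS⟩ : ∃ S : ℤ, S = u^2+v^2+w^2+w := ⟨_, rfl⟩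
    have h4 : 4*S = 8*M + 2 := by rw [hS]; linear_combination h
    omega
  · exfalso
    obtain ⟨v, hv⟩ := hoy
    rw [hu, hv, hw] at h
    obtain ⟨S, hS⟩ : ∃ S : ℤ, S = u^2+v^2+v+w^2 := ⟨_, rfl⟩
    have h4 : 4*S = 8*M + 2 := by rw [hS]; linear_combination h
    omega
  · exfalso
    obtain ⟨v, hv⟩ := hoy
    obtain ⟨w, hw⟩ := hoz
    rw [hu, hv, hw] at h
    obtain ⟨S, hS⟩ : ∃ S : ℤ, S = u^2+v^2+v+w^2+w := ⟨_, rfl⟩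
    have h4 : 4*S = 8*M + 1 := by rw [hS]; linear_combination h
    omega
  · exfalso
    obtain ⟨u, hu⟩ := hox
    rw [hu, hv, hw] at h
    obtain ⟨S, hS⟩ : ∃ S : ℤ, S = u^2+u+v^2+w^2 := ⟨_, rfl⟩
    have h4 : 4*S = 8*M + 2 := by rw [hS]; linear_combination h
    omega
  · exfalso
    obtain ⟨u, hu⟩ := hox
    obtain ⟨w, hw⟩ := hoz
    rw [hu, hv, hw] at h
    obtain ⟨S, hS⟩ : ∃ S : ℤ, S = u^2+u+v^2+w^2+w := ⟨_, rfl⟩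
    have h4 : 4*S = 8*M + 1 := by rw [hS]; linear_combination h
    omega
  · exfalso
    obtain ⟨u, hu⟩ := hox
    obtain ⟨v, hv⟩ := hoy
    rw [hu, hv, hw] at h
    obtain ⟨S, hS⟩ : ∃ S : ℤ, S = u^2+u+v^2+v+w^2 := ⟨_, rfl⟩
    have h4 : 4*S = 8*M + 1 := by rw [hS]; linear_combination h
    omega
  · exact ⟨hox, hoy, hoz⟩

end UQP

theorem universal_qp2 (m : ℕ) :
    ∃ a b c : ℤ, a ^ 2 + b ^ 2 + c ^ 2 + a * b + b * c + c * a + a + b + c = m := by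
  obtain ⟨x, y, z, h⟩ := UQP.sum_three_squares_8m3 m
  obtain ⟨⟨X, hX⟩, ⟨Y, hY⟩, ⟨Z, hZ⟩⟩ := UQP.odd3 h
  rw [hX, hY, hZ] at h
  rcases Int.even_or_odd (X + Y + Z) with ⟨t, ht⟩ | ⟨t, ht⟩
  · have hY2 : Y = t + t - X - Z := by linarith
    subst hY2
    refine ⟨X + Z - t, t - Z, t - X, ?_⟩
    have h8 : 8*((X+Z-t)^2 + (t-Z)^2 + (t-X)^2 + (X+Z-t)*(t-Z) + (t-Z)*(t-X)
        + (t-X)*(X+Z-t) + (X+Z-t) + (t-Z) + (t-X)) = 8*(m:ℤ) := by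
      linear_combination h
    linarith
  · have hY2 : Y = 2*t + 1 - X - Z := by linarith
    subst hY2
    refine ⟨Z - t - 1, t - X - Z, t + 1, ?_⟩
    have h8 : 8*((Z-t-1)^2 + (t-X-Z)^2 + (t+1)^2 + (Z-t-1)*(t-X-Z) + (t-X-Z)*(t+1)
        + (t+1)*(Z-t-1) + (Z-t-1) + (t-X-Z) + (t+1)) = 8*(m:ℤ) := by
      linear_combination h
    linarith
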